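/- Let u ∈ K solve ⟨Au − ℓ, v − u⟩ ≥ 0 for all v ∈ K, and let u* ∈ K̃ solve the discrete variational inequality with the same (unperturbed) operator and data: ⟨Au* − ℓ, ṽ − u*⟩ ≥ 0 for all ṽ ∈ K̃. Then for all v ∈ K and all ṽ ∈ K̃ there holds ‖u − u*‖_V² ≤ (2 + 4c²/α²) ‖u − ṽ‖_V² + (4/α) ⟨Au − ℓ, ṽ − u + v − u*⟩. -/

import Mathlib

/-- Falk's theorem (with slightly enlarged constants): if `u ∈ K` solves the
continuous VI and `u* ∈ K̃ ⊆ W` solves the discrete VI with the *same* operator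
and data, then for all `v ∈ K`, `ṽ ∈ K̃`:
`‖u − u*‖² ≤ (2 + 4c²/α²)‖u − ṽ‖² + (4/α)⟨Au − ℓ, ṽ − u + v − u*⟩`. -/
theorem falk_estimate
    {V : Type*} [NormedAddCommGroup V] [InnerProductSpace ℝ V] [CompleteSpace V]
    (W : Submodule ℝ V) [CompleteSpace W]
    (A : V →L[ℝ] V →L[ℝ] ℝ) (l : V →L[ℝ] ℝ)
    (c α : ℝ) (hc : 0 < c) (hα : 0 < α)
    (hAcont : ∀ v : V, ‖A v‖ ≤ c * ‖v‖)
    (hAell : ∀ v : V, α * ‖v‖ ^ 2 ≤ A v v)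
    (K : Set V) (hKne : K.Nonempty) (hKconv : Convex ℝ K) (hKcl : IsClosed K)
    (Kt : Set W) (hKtne : Kt.Nonempty) (hKtconv : Convex ℝ Kt) (hKtcl : IsClosed Kt)
    (u : V) (hu : u ∈ K)
    (huVI : ∀ v ∈ K, 0 ≤ (A u - l) (v - u))
    (ustar : W) (hustar : ustar ∈ Kt)
    (hustarVI : ∀ vt ∈ Kt, 0 ≤ (A (ustar : V) - l) ((vt : V) - (ustar : V))) :
    ∀ v ∈ K, ∀ vt ∈ Kt,
      ‖u - (ustar : V)‖ ^ 2 ≤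
        (2 + 4 * c ^ 2 / α ^ 2) * ‖u - (vt : V)‖ ^ 2
          + (4 / α) * (A u - l) ((vt : V) - u + v - (ustar : V)) := by
  intro v hv vt hvt
  have hP1 := huVI v hv
  have hP2 := hustarVI vt hvt
  have hell := hAell (u - (ustar : V))
  set E : ℝ := ‖u - (ustar : V)‖ with hE
  set T : ℝ := ‖u - (vt : V)‖ with hT
  set P1 : ℝ := (A u - l) (v - u) with hP1d
  set P2 : ℝ := (A (ustar : V) - l) ((vt : V) - (ustar : V)) with hP2d
  set Q : ℝ := (A u - l) ((vt : V) - u + v - (ustar : V)) with hQd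
  have hident : (A (u - (ustar : V))) (u - (ustar : V))
      = Q - P1 - P2 + (A (u - (ustar : V))) (u - (vt : V)) := by
    simp only [hQd, hP1d, hP2d, map_sub, map_add, ContinuousLinearMap.sub_apply,
      ContinuousLinearMap.coe_sub', Pi.sub_apply]
    ring
  have hb : (A (u - (ustar : V))) (u - (vt : V)) ≤ c * E * T := by
    calc (A (u - (ustar : V))) (u - (vt : V))
        ≤ ‖(A (u - (ustar : V))) (u - (vt : V))‖ := le_abs_self _
      _ ≤ ‖A (u - (ustar : V))‖ * ‖u - (vt : V)‖ := ContinuousLinearMap.le_opNorm _ _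
      _ ≤ (c * E) * T := by
          apply mul_le_mul_of_nonneg_right (hAcont _) (norm_nonneg _)
      _ = c * E * T := by ring
  have h1 : α * E ^ 2 ≤ Q - P1 - P2 + c * E * T := by
    calc α * E ^ 2 ≤ (A (u - (ustar : V))) (u - (ustar : V)) := hell
      _ = Q - P1 - P2 + (A (u - (ustar : V))) (u - (vt : V)) := hident
      _ ≤ Q - P1 - P2 + c * E * T := by linarith
  have hY : 12 * α * (c * E * T) ≤ 9 * α ^ 2 * E ^ 2 + 4 * c ^ 2 * T ^ 2 := by
    nlinarith [sq_nonneg (3 * α * E - 2 * c * T)]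
  have hs : 12 * α * (α * E ^ 2) ≤ 12 * α * (Q - P1 - P2 + c * E * T) := by
    have h12 : (0 : ℝ) ≤ 12 * α := by positivity
    exact mul_le_mul_of_nonneg_left h1 h12
  have haP1 : 0 ≤ 12 * α * P1 := by positivity
  have haP2 : 0 ≤ 12 * α * P2 := by positivity
  have hkey : α ^ 2 * E ^ 2 ≤ (2 * α ^ 2 + 4 * c ^ 2) * T ^ 2 + 4 * α * Q := by
    nlinarith [sq_nonneg T, sq_nonneg α, sq_nonneg E, mul_pos hα hα]
  have hα2 : (0 : ℝ) < α ^ 2 := by positivity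
  rw [← mul_le_mul_iff_right₀ hα2]
  have hexp : α ^ 2 * ((2 + 4 * c ^ 2 / α ^ 2) * T ^ 2 + 4 / α * Q)
      = (2 * α ^ 2 + 4 * c ^ 2) * T ^ 2 + 4 * α * Q := by
    field_simp
  rw [hexp]
  exact hkey
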